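/- Let φ : {0,1}^m × {0,1}^ℓ → Bool. Define the two-agent sequential decision-making mechanism M with action sets A_1 = {0,1}^m × {0,1} (agent 1 chooses a pair (a, z₁)) and A_2 = {0,1}^ℓ × {0,1} (agent 2 chooses a pair (b, z₂)), and deontic constraint γ((a, z₁), (b, z₂)) = ((¬ φ(a, b)) ∧ z₁) ∨ z₂. Then (for every a ∈ {0,1}^m there exists b ∈ {0,1}^ℓ with φ(a, b) = true) if and only if M is diffusion-free. -/
import Mathlib


/-- A sequential decision-making mechanism: `n` agents, finite nonempty
action sets `A 0, …, A (n-1)` (agents act in the order of their indices),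
and a deontic constraint `γ` on action profiles. -/
structure Mech where
  n : ℕ
  A : Fin n → Type
  fin : ∀ i, Finite (A i)
  ne : ∀ i, Nonempty (A i)
  γ : (∀ i, A i) → Bool

namespace Mech

/-- An action profile. -/
abbrev Profile (M : Mech) : Type := ∀ i, M.A i

/-- Agent `i` is responsible under profile `s`: the deontic constraint is
violated, and agent `i` had an action `t` that, given the actions of the
agents before it, would have guaranteed the constraint no matter what the
later agents do. -/
def Responsible (M : Mech) (s : M.Profile) (i : Fin M.n) : Prop :=
  M.γ s = false ∧ ∃ t : M.A i, ∀ s' : M.Profile,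
    (∀ j, j < i → s' j = s j) → s' i = t → M.γ s' = true

/-- `cf_i(s_1, …, s_{i-1})`: agent `i` has an action guaranteeing the
constraint, given the prefix of `s` before `i`. -/
def Cf (M : Mech) (s : M.Profile) (i : Fin M.n) : Prop :=
  ∃ t : M.A i, ∀ s' : M.Profile,
    (∀ j, j < i → s' j = s j) → s' i = t → M.γ s' = true

/-- Diffusion-free: at most one responsible agent whenever `γ` is violated. -/
def DF (M : Mech) : Prop :=
  ∀ s : M.Profile, M.γ s = false →
    ∀ i j, M.Responsible s i → M.Responsible s j → i = j

/-- Gap-free: at least one responsible agent whenever `γ` is violated. -/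
def GF (M : Mech) : Prop :=
  ∀ s : M.Profile, M.γ s = false → ∃ i, M.Responsible s i

/-- Gap-and-diffusion-free: exactly one responsible agent whenever `γ` is violated. -/
def GDF (M : Mech) : Prop :=
  ∀ s : M.Profile, M.γ s = false → ∃! i, M.Responsible s i

/-- Responsibility-free: no agent is responsible under any profile. -/
def RF (M : Mech) : Prop :=
  ∀ (s : M.Profile) (i : Fin M.n), ¬ M.Responsible s i

/-- Agent `j` of the partial mechanism `M_k` as an agent of `M`. -/
def shift (M : Mech) (k : ℕ) (h : k ≤ M.n) (j : Fin (M.n - k)) : Fin M.n :=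
  ⟨k + j.val, by omega⟩

/-- Combine a prefix of `s` (first `k` actions) with actions `u` of
agents `k+1, …, n` into a full profile. -/
def glue (M : Mech) (k : ℕ) (h : k ≤ M.n) (s : M.Profile)
    (u : ∀ j : Fin (M.n - k), M.A (M.shift k h j)) : M.Profile := fun i =>
  if hi : i.val < k then s i
  else
    have hj : i.val - k < M.n - k := by omega
    have he : M.shift k h ⟨i.val - k, hj⟩ = i := Fin.ext (by
      show k + (i.val - k) = i.val
      omega)
    he ▸ u ⟨i.val - k, hj⟩

/-- The partial mechanism `M_k(s_1, …, s_k)`: the first `k` agents have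
already acted according to `s`. -/
def part (M : Mech) (k : ℕ) (h : k ≤ M.n) (s : M.Profile) : Mech where
  n := M.n - k
  A := fun j => M.A (M.shift k h j)
  fin := fun _ => M.fin _
  ne := fun _ => M.ne _
  γ := fun u => M.γ (M.glue k h s u)

/-- The restriction of a profile of `M` to a profile of `M_k(s_1, …, s_k)`. -/
def restrict (M : Mech) (k : ℕ) (h : k ≤ M.n) (s : M.Profile) :
    (M.part k h s).Profile :=
  fun j => s (M.shift k h j)

end Mech

/-- The two-agent mechanism of STATEMENT 1: agent 1 chooses `(a, z₁)`,
agent 2 chooses `(b, z₂)`, and `γ((a,z₁),(b,z₂)) = ((¬φ(a,b)) ∧ z₁) ∨ z₂`. -/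
def diffusionMech (m ℓ : ℕ) (φ : (Fin m → Bool) → (Fin ℓ → Bool) → Bool) : Mech where
  n := 2
  A := ![(Fin m → Bool) × Bool, (Fin ℓ → Bool) × Bool]
  fin := by intro i; fin_cases i <;> dsimp <;> infer_instance
  ne := by intro i; fin_cases i <;> dsimp <;> infer_instance
  γ := fun s => ((!(φ (s 0).1 (s 1).1)) && (s 0).2) || (s 1).2

section Aux

variable (m ℓ : ℕ) (φ : (Fin m → Bool) → (Fin ℓ → Bool) → Bool)

def dmIdx0 : Fin (diffusionMech m ℓ φ).n := ⟨0, by show (0:ℕ) < 2; omega⟩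
def dmIdx1 : Fin (diffusionMech m ℓ φ).n := ⟨1, by show (1:ℕ) < 2; omega⟩

def dmProf (x : (Fin m → Bool) × Bool) (y : (Fin ℓ → Bool) × Bool) :
    (diffusionMech m ℓ φ).Profile := fun i =>
  match i with
  | ⟨0, _⟩ => x
  | ⟨1, _⟩ => y
  | ⟨k+2, h⟩ => absurd h (by rw [show (diffusionMech m ℓ φ).n = 2 from rfl]; omega)

lemma dmγ (s : (diffusionMech m ℓ φ).Profile) :
    (diffusionMech m ℓ φ).γ s =
      (((!(φ (s (dmIdx0 m ℓ φ)).1 (s (dmIdx1 m ℓ φ)).1)) && (s (dmIdx0 m ℓ φ)).2)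
        || (s (dmIdx1 m ℓ φ)).2) := rfl

end Aux

/-- `∀a ∃b, φ(a,b)` holds iff the mechanism is diffusion-free. -/
theorem forall_exists_iff_diffusionFree (m ℓ : ℕ)
    (φ : (Fin m → Bool) → (Fin ℓ → Bool) → Bool) :
    (∀ a : Fin m → Bool, ∃ b : Fin ℓ → Bool, φ a b = true) ↔
      (diffusionMech m ℓ φ).DF := by
  constructor
  · intro h s hs i j hi hj
    have key : ∀ (k : Fin (diffusionMech m ℓ φ).n),
        (diffusionMech m ℓ φ).Responsible s k → k = dmIdx1 m ℓ φ := by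
      rintro ⟨v, hv⟩ ⟨hγ, t, ht⟩
      have hv2 : v < 2 := hv
      match v, hv2 with
      | 1, _ => rfl
      | 0, _ =>
        exfalso
        obtain ⟨b, hb⟩ := h t.1
        have h2 := ht (dmProf m ℓ φ t (b, false))
          (by rintro ⟨jv, hj⟩ hjlt; exact absurd hjlt (by simp [Fin.lt_def])) rfl
        rw [dmγ] at h2
        simp only [dmProf, dmIdx0, dmIdx1] at h2
        rw [hb] at h2
        simp at h2
    rw [key i hi, key j hj]
  · intro hdf a
    by_contra hnb
    push_neg at hnb
    simp only [Bool.not_eq_true] at hnb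
    set s : (diffusionMech m ℓ φ).Profile :=
      dmProf m ℓ φ (a, false) ((fun _ => false), false) with hsdef
    have hγ : (diffusionMech m ℓ φ).γ s = false := by
      rw [dmγ]; simp [hsdef, dmProf, dmIdx0, dmIdx1]
    have h0 : (diffusionMech m ℓ φ).Responsible s (dmIdx0 m ℓ φ) := by
      refine ⟨hγ, ((a, true) : (Fin m → Bool) × Bool), ?_⟩
      intro s' _ hs0
      rw [dmγ, hs0]
      simp [hnb]
    have h1 : (diffusionMech m ℓ φ).Responsible s (dmIdx1 m ℓ φ) := by
      refine ⟨hγ, (((fun _ => false), true) : (Fin ℓ → Bool) × Bool), ?_⟩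
      intro s' _ hs1
      rw [dmγ, hs1]
      simp
    have := hdf s hγ _ _ h0 h1
    exact absurd (congrArg Fin.val this) (by simp [dmIdx0, dmIdx1])
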